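/- Let (a_n)_{n≥1} be a sequence of bounded operators on a complex Hilbert space H satisfying the canonical anticommutation relations, and let Ω ∈ H be a unit vector with a_n Ω = 0 for all n ≥ 1 which is cyclic for the *-algebra generated by {a_n : n ≥ 1} (so (H, (a_n), Ω) is a Fock representation). Define for n ≥ 1: c_n := (−1)^{n−1}(a_1 a_1^* a_{2n+1}^* + a_1^* a_1 a_{2n+1}) and d_n := (−1)^{n−1}(a_1 a_1^* a_{2n} − a_1^* a_1 a_{2n}^*), and set Ω^* := a_1^* Ω. Let V be the closed linear span of the vectors c_{k_1}⋯c_{k_p} d_{l_1}^*⋯d_{l_q}^* Ω (over all p, q ≥ 0 and indices k_1,…,k_p, l_1,…,l_q ≥ 1), and let V^* be the closed linear span of the vectors d_{k_1}⋯d_{k_p} c_{l_1}^*⋯c_{l_q}^* Ω^*. Then V and V^* are orthogonal, each is invariant under every c_n, d_n, c_n^*, d_n^*, and H = V ⊕ V^*. That is, under the mixture of fermions the Fock representation decomposes as the direct sum of the infinite wedge representation (with Dirac vacuum Ω) and the dual infinite wedge representation (with dual Dirac vacuum Ω^*). -/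

import Mathlib

noncomputable section
set_option linter.unusedSectionVars false

/-- The canonical anticommutation relations for a sequence `a_1, a_2, …`
(indexed by `n ≥ 1`). -/
def SatisfiesCAR {A : Type*} [Ring A] [StarRing A] (a : ℕ → A) : Prop :=
  ∀ n m : ℕ, 1 ≤ n → 1 ≤ m →
    (a n * star (a m) + star (a m) * a n = if n = m then (1 : A) else 0) ∧
    a n * a m + a m * a n = 0

/-- The mixed fermion `c_n = b_{n-1/2} = (-1)^{n-1}(a_1 a_1^* a_{2n+1}^* + a_1^* a_1 a_{2n+1})`. -/
def mixedC {A : Type*} [Ring A] [StarRing A] (a : ℕ → A) (n : ℕ) : A :=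
  (-1 : A) ^ (n - 1) *
    (a 1 * star (a 1) * star (a (2 * n + 1)) + star (a 1) * a 1 * a (2 * n + 1))

/-- The mixed fermion `d_n = b_{-(n-1/2)} = (-1)^{n-1}(a_1 a_1^* a_{2n} - a_1^* a_1 a_{2n}^*)`. -/
def mixedD {A : Type*} [Ring A] [StarRing A] (a : ℕ → A) (n : ℕ) : A :=
  (-1 : A) ^ (n - 1) *
    (a 1 * star (a 1) * a (2 * n) - star (a 1) * a 1 * star (a (2 * n)))



noncomputable section


/-- The closed span of the vectors `c_{k_1} ⋯ c_{k_p} d_{l_1}^* ⋯ d_{l_q}^* v`. -/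
def wedgeSpace {H : Type*} [NormedAddCommGroup H] [InnerProductSpace ℂ H]
    [CompleteSpace H] (c d : ℕ → H →L[ℂ] H) (v : H) : Submodule ℂ H :=
  (Submodule.span ℂ {x : H | ∃ K L : List ℕ, (∀ k ∈ K, 1 ≤ k) ∧ (∀ l ∈ L, 1 ≤ l) ∧
      x = ((K.map c).prod * (L.map fun l => star (d l)).prod) v}).topologicalClosure

namespace FockProof

variable {R : Type*} [Ring R] [StarRing R]

lemma comm_of_anti {x y z : R} (h1 : z * x = -(x * z)) (h2 : z * y = -(y * z)) :
    z * (x * y) = (x * y) * z := by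
  rw [← mul_assoc, h1, neg_mul, mul_assoc, h2, mul_neg, neg_neg, ← mul_assoc]

lemma neg_pow_comm (k : ℕ) (z : R) : z * (-1 : R) ^ k = (-1 : R) ^ k * z :=
  ((Commute.neg_one_left z).pow_left k).symm.eq

lemma mulformL (k : ℕ) (z p q x y : R) :
    z * ((-1 : R) ^ k * (p * x + q * y)) = (-1 : R) ^ k * ((z * p) * x + (z * q) * y) := by
  rw [← mul_assoc, neg_pow_comm, mul_assoc]
  congr 1
  rw [mul_add, ← mul_assoc, ← mul_assoc]

lemma mulformR (k : ℕ) (z p q x y : R) :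
    ((-1 : R) ^ k * (p * x + q * y)) * z = (-1 : R) ^ k * (p * (x * z) + q * (y * z)) := by
  rw [mul_assoc]
  congr 1
  rw [add_mul, mul_assoc, mul_assoc]

lemma mix_mul {p q x y : R} (z w : R) (hpp : p * p = p) (hqq : q * q = q) (hpq : p * q = 0)
    (hqp : q * p = 0) (hxp : x * p = p * x) (hxq : x * q = q * x) (hyp : y * p = p * y)
    (hyq : y * q = q * y) :
    (p * x + q * y) * (p * z + q * w) = p * (x * z) + q * (y * w) := by
  have h1 : (p * x) * (p * z) = p * (x * z) := by
    rw [mul_assoc p x, ← mul_assoc x, hxp, ← mul_assoc, ← mul_assoc, hpp, mul_assoc]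
  have h2 : (p * x) * (q * w) = 0 := by
    rw [mul_assoc p x, ← mul_assoc x, hxq, ← mul_assoc, ← mul_assoc, hpq, zero_mul, zero_mul]
  have h3 : (q * y) * (p * z) = 0 := by
    rw [mul_assoc q y, ← mul_assoc y, hyp, ← mul_assoc, ← mul_assoc, hqp, zero_mul, zero_mul]
  have h4 : (q * y) * (q * w) = q * (y * w) := by
    rw [mul_assoc q y, ← mul_assoc y, hyq, ← mul_assoc, ← mul_assoc, hqq, mul_assoc]
  rw [add_mul, mul_add, mul_add, h1, h2, h3, h4, add_zero, zero_add]

lemma mixProd (i j : ℕ) {p q x y : R} (z w : R) (hpp : p * p = p) (hqq : q * q = q)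
    (hpq : p * q = 0) (hqp : q * p = 0) (hxp : x * p = p * x) (hxq : x * q = q * x)
    (hyp : y * p = p * y) (hyq : y * q = q * y) :
    ((-1 : R) ^ i * (p * x + q * y)) * ((-1 : R) ^ j * (p * z + q * w))
      = (-1 : R) ^ (i + j) * (p * (x * z) + q * (y * w)) := by
  rw [mul_assoc, ← mul_assoc (p * x + q * y), neg_pow_comm j, mul_assoc ((-1 : R) ^ j),
    ← mul_assoc, ← pow_add, mix_mul z w hpp hqq hpq hqp hxp hxq hyp hyq]

lemma combine (t p q u v u' v' : R) :
    t * (p * u + q * v) + t * (p * u' + q * v') = t * (p * (u + u') + q * (v + v')) := by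
  noncomm_ring

lemma pass_list (z : R) (f g : ℕ → R) :
    ∀ l : List ℕ, (∀ k ∈ l, z * f k = g k * z ∨ z * f k = -(g k * z)) →
      z * (l.map f).prod = (l.map g).prod * z ∨
        z * (l.map f).prod = -((l.map g).prod * z)
  | [], _ => by simp
  | k :: l, h => by
    have hk := h k (List.mem_cons_self)
    have hl := pass_list z f g l (fun x hx => h x (List.mem_cons_of_mem _ hx))
    simp only [List.map_cons, List.prod_cons]
    rcases hk with hk | hk <;> rcases hl with hl | hl
    · left; rw [← mul_assoc, hk, mul_assoc, hl, ← mul_assoc]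
    · right; rw [← mul_assoc, hk, mul_assoc, hl, mul_neg, ← mul_assoc]
    · right; rw [← mul_assoc, hk, neg_mul, mul_assoc, hl, ← mul_assoc]
    · left; rw [← mul_assoc, hk, neg_mul, mul_assoc, hl, mul_neg, neg_neg, ← mul_assoc]

lemma pass_word (z : R) (f g f' g' : ℕ → R) (K L : List ℕ)
    (hK : ∀ k ∈ K, z * f k = g k * z ∨ z * f k = -(g k * z))
    (hL : ∀ l ∈ L, z * f' l = g' l * z ∨ z * f' l = -(g' l * z)) :
    z * ((K.map f).prod * (L.map f').prod) = ((K.map g).prod * (L.map g').prod) * z ∨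
      z * ((K.map f).prod * (L.map f').prod) = -(((K.map g).prod * (L.map g').prod) * z) := by
  rcases pass_list z f g K hK with h1 | h1 <;> rcases pass_list z f' g' L hL with h2 | h2
  · left; rw [← mul_assoc, h1, mul_assoc, h2, ← mul_assoc]
  · right; rw [← mul_assoc, h1, mul_assoc, h2, mul_neg, ← mul_assoc]
  · right; rw [← mul_assoc, h1, neg_mul, mul_assoc, h2, ← mul_assoc]
  · left; rw [← mul_assoc, h1, neg_mul, mul_assoc, h2, mul_neg, neg_neg, ← mul_assoc]


lemma mulformLsub (k : ℕ) (z p q x y : R) :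
    z * ((-1 : R) ^ k * (p * x - q * y)) = (-1 : R) ^ k * ((z * p) * x - (z * q) * y) := by
  rw [← mul_assoc, neg_pow_comm, mul_assoc]
  congr 1
  rw [mul_sub, ← mul_assoc, ← mul_assoc]

lemma mulformRsub (k : ℕ) (z p q x y : R) :
    ((-1 : R) ^ k * (p * x - q * y)) * z = (-1 : R) ^ k * (p * (x * z) - q * (y * z)) := by
  rw [mul_assoc]
  congr 1
  rw [sub_mul, mul_assoc, mul_assoc]

lemma mix_mul_mm {p q x y : R} (z w : R) (hpp : p * p = p) (hqq : q * q = q) (hpq : p * q = 0)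
    (hqp : q * p = 0) (hxp : x * p = p * x) (hxq : x * q = q * x) (hyp : y * p = p * y)
    (hyq : y * q = q * y) :
    (p * x - q * y) * (p * z - q * w) = p * (x * z) + q * (y * w) := by
  have h1 : (p * x) * (p * z) = p * (x * z) := by
    rw [mul_assoc p x, ← mul_assoc x, hxp, ← mul_assoc, ← mul_assoc, hpp, mul_assoc]
  have h2 : (p * x) * (q * w) = 0 := by
    rw [mul_assoc p x, ← mul_assoc x, hxq, ← mul_assoc, ← mul_assoc, hpq, zero_mul, zero_mul]
  have h3 : (q * y) * (p * z) = 0 := by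
    rw [mul_assoc q y, ← mul_assoc y, hyp, ← mul_assoc, ← mul_assoc, hqp, zero_mul, zero_mul]
  have h4 : (q * y) * (q * w) = q * (y * w) := by
    rw [mul_assoc q y, ← mul_assoc y, hyq, ← mul_assoc, ← mul_assoc, hqq, mul_assoc]
  rw [sub_mul, mul_sub, mul_sub, h1, h2, h3, h4, sub_zero, zero_sub, sub_neg_eq_add]

lemma mix_mul_pm {p q x y : R} (z w : R) (hpp : p * p = p) (hqq : q * q = q) (hpq : p * q = 0)
    (hqp : q * p = 0) (hxp : x * p = p * x) (hxq : x * q = q * x) (hyp : y * p = p * y)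
    (hyq : y * q = q * y) :
    (p * x + q * y) * (p * z - q * w) = p * (x * z) - q * (y * w) := by
  have h1 : (p * x) * (p * z) = p * (x * z) := by
    rw [mul_assoc p x, ← mul_assoc x, hxp, ← mul_assoc, ← mul_assoc, hpp, mul_assoc]
  have h2 : (p * x) * (q * w) = 0 := by
    rw [mul_assoc p x, ← mul_assoc x, hxq, ← mul_assoc, ← mul_assoc, hpq, zero_mul, zero_mul]
  have h3 : (q * y) * (p * z) = 0 := by
    rw [mul_assoc q y, ← mul_assoc y, hyp, ← mul_assoc, ← mul_assoc, hqp, zero_mul, zero_mul]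
  have h4 : (q * y) * (q * w) = q * (y * w) := by
    rw [mul_assoc q y, ← mul_assoc y, hyq, ← mul_assoc, ← mul_assoc, hqq, mul_assoc]
  rw [add_mul, mul_sub, mul_sub, h1, h2, h3, h4, sub_zero, zero_sub, ← sub_eq_add_neg]

lemma mix_mul_mp {p q x y : R} (z w : R) (hpp : p * p = p) (hqq : q * q = q) (hpq : p * q = 0)
    (hqp : q * p = 0) (hxp : x * p = p * x) (hxq : x * q = q * x) (hyp : y * p = p * y)
    (hyq : y * q = q * y) :
    (p * x - q * y) * (p * z + q * w) = p * (x * z) - q * (y * w) := by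
  have h1 : (p * x) * (p * z) = p * (x * z) := by
    rw [mul_assoc p x, ← mul_assoc x, hxp, ← mul_assoc, ← mul_assoc, hpp, mul_assoc]
  have h2 : (p * x) * (q * w) = 0 := by
    rw [mul_assoc p x, ← mul_assoc x, hxq, ← mul_assoc, ← mul_assoc, hpq, zero_mul, zero_mul]
  have h3 : (q * y) * (p * z) = 0 := by
    rw [mul_assoc q y, ← mul_assoc y, hyp, ← mul_assoc, ← mul_assoc, hqp, zero_mul, zero_mul]
  have h4 : (q * y) * (q * w) = q * (y * w) := by
    rw [mul_assoc q y, ← mul_assoc y, hyq, ← mul_assoc, ← mul_assoc, hqq, mul_assoc]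
  rw [sub_mul, mul_add, mul_add, h1, h2, h3, h4, add_zero, zero_add]

lemma mixProd_mm (i j : ℕ) {p q x y : R} (z w : R) (hpp : p * p = p) (hqq : q * q = q)
    (hpq : p * q = 0) (hqp : q * p = 0) (hxp : x * p = p * x) (hxq : x * q = q * x)
    (hyp : y * p = p * y) (hyq : y * q = q * y) :
    ((-1 : R) ^ i * (p * x - q * y)) * ((-1 : R) ^ j * (p * z - q * w))
      = (-1 : R) ^ (i + j) * (p * (x * z) + q * (y * w)) := by
  rw [mul_assoc, ← mul_assoc (p * x - q * y), neg_pow_comm j, mul_assoc ((-1 : R) ^ j),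
    ← mul_assoc, ← pow_add, mix_mul_mm z w hpp hqq hpq hqp hxp hxq hyp hyq]

lemma mixProd_pm (i j : ℕ) {p q x y : R} (z w : R) (hpp : p * p = p) (hqq : q * q = q)
    (hpq : p * q = 0) (hqp : q * p = 0) (hxp : x * p = p * x) (hxq : x * q = q * x)
    (hyp : y * p = p * y) (hyq : y * q = q * y) :
    ((-1 : R) ^ i * (p * x + q * y)) * ((-1 : R) ^ j * (p * z - q * w))
      = (-1 : R) ^ (i + j) * (p * (x * z) - q * (y * w)) := by
  rw [mul_assoc, ← mul_assoc (p * x + q * y), neg_pow_comm j, mul_assoc ((-1 : R) ^ j),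
    ← mul_assoc, ← pow_add, mix_mul_pm z w hpp hqq hpq hqp hxp hxq hyp hyq]

lemma mixProd_mp (i j : ℕ) {p q x y : R} (z w : R) (hpp : p * p = p) (hqq : q * q = q)
    (hpq : p * q = 0) (hqp : q * p = 0) (hxp : x * p = p * x) (hxq : x * q = q * x)
    (hyp : y * p = p * y) (hyq : y * q = q * y) :
    ((-1 : R) ^ i * (p * x - q * y)) * ((-1 : R) ^ j * (p * z + q * w))
      = (-1 : R) ^ (i + j) * (p * (x * z) - q * (y * w)) := by
  rw [mul_assoc, ← mul_assoc (p * x - q * y), neg_pow_comm j, mul_assoc ((-1 : R) ^ j),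
    ← mul_assoc, ← pow_add, mix_mul_mp z w hpp hqq hpq hqp hxp hxq hyp hyq]

lemma combine_sub (t p q u v u' v' : R) :
    t * (p * u - q * v) + t * (p * u' - q * v') = t * (p * (u + u') - q * (v + v')) := by
  noncomm_ring

lemma star_anti {x y : R} (h : x * y + y * x = 0) :
    star x * star y + star y * star x = 0 := by
  have := congrArg star h
  simpa [star_add, star_mul, add_comm] using this

lemma star_anti2 {x y : R} (h : x * star y + star y * x = 0) :
    y * star x + star x * y = 0 := by
  have := congrArg star h
  simpa [star_add, star_mul, star_star, add_comm] using this



section Proj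
variable {R : Type*} [Ring R] [StarRing R]

lemma hβα {α β : R} (hone : α * β + β * α = 1) : β * α = 1 - α * β := by
  rw [eq_sub_iff_add_eq, add_comm]; exact hone

lemma hαβ {α β : R} (hone : α * β + β * α = 1) : α * β = 1 - β * α := by
  rw [eq_sub_iff_add_eq]; exact hone

lemma pP2 {α β : R} (hββ : β * β = 0) (hone : α * β + β * α = 1) :
    (α * β) * (α * β) = α * β := by
  calc (α * β) * (α * β) = α * ((β * α) * β) := by rw [mul_assoc, ← mul_assoc β]
    _ = α * ((1 - α * β) * β) := by rw [hβα hone]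
    _ = α * (β - α * (β * β)) := by rw [sub_mul, one_mul, mul_assoc]
    _ = α * β := by rw [hββ, mul_zero, sub_zero]

lemma qQ2 {α β : R} (hαα : α * α = 0) (hone : α * β + β * α = 1) :
    (β * α) * (β * α) = β * α := by
  calc (β * α) * (β * α) = β * ((α * β) * α) := by rw [mul_assoc, ← mul_assoc α]
    _ = β * ((1 - β * α) * α) := by rw [hαβ hone]
    _ = β * (α - β * (α * α)) := by rw [sub_mul, one_mul, mul_assoc]
    _ = β * α := by rw [hαα, mul_zero, sub_zero]

lemma pPqQ {α β : R} (hββ : β * β = 0) : (α * β) * (β * α) = 0 := by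
  rw [mul_assoc, ← mul_assoc β, hββ, zero_mul, mul_zero]

lemma qQpP {α β : R} (hαα : α * α = 0) : (β * α) * (α * β) = 0 := by
  rw [mul_assoc, ← mul_assoc α, hαα, zero_mul, mul_zero]

lemma pPα {α β : R} (hαα : α * α = 0) (hone : α * β + β * α = 1) : (α * β) * α = α := by
  rw [mul_assoc, hβα hone, mul_sub, mul_one, ← mul_assoc, hαα, zero_mul, sub_zero]

lemma αqQ {α β : R} (hαα : α * α = 0) (hone : α * β + β * α = 1) : α * (β * α) = α := by
  rw [← mul_assoc, pPα hαα hone]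

lemma αpP {α β : R} (hαα : α * α = 0) : α * (α * β) = 0 := by
  rw [← mul_assoc, hαα, zero_mul]

lemma qQα {α β : R} (hαα : α * α = 0) : (β * α) * α = 0 := by
  rw [mul_assoc, hαα, mul_zero]

lemma qQβ {α β : R} (hββ : β * β = 0) (hone : α * β + β * α = 1) : (β * α) * β = β := by
  rw [mul_assoc, hαβ hone, mul_sub, mul_one, ← mul_assoc, hββ, zero_mul, sub_zero]

lemma βpP {α β : R} (hββ : β * β = 0) (hone : α * β + β * α = 1) : β * (α * β) = β := by
  rw [← mul_assoc, qQβ hββ hone]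

lemma βqQ {α β : R} (hββ : β * β = 0) : β * (β * α) = 0 := by
  rw [← mul_assoc, hββ, zero_mul]

lemma pPβ {α β : R} (hββ : β * β = 0) : (α * β) * β = 0 := by
  rw [mul_assoc, hββ, mul_zero]

end Proj

section CAR
variable {R : Type*} [Ring R] [StarRing R] (a : ℕ → R)

lemma star_sq (hsq : a 1 * a 1 = 0) : star (a 1) * star (a 1) = 0 := by
  have := congrArg star hsq
  simpa [star_mul] using this

lemma honeA (ha : SatisfiesCAR a) : a 1 * star (a 1) + star (a 1) * a 1 = 1 := by
  have := (ha 1 1 le_rfl le_rfl).1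
  simpa using this

lemma antiA (ha : SatisfiesCAR a) (k : ℕ) (hk : 1 ≤ k) : a k * a 1 = -(a 1 * a k) :=
  eq_neg_of_add_eq_zero_left ((ha k 1 hk le_rfl).2)

lemma antiB (ha : SatisfiesCAR a) (k : ℕ) (hk : 1 ≤ k) (hk1 : k ≠ 1) :
    a k * star (a 1) = -(star (a 1) * a k) := by
  have := (ha k 1 hk le_rfl).1
  rw [if_neg hk1] at this
  exact eq_neg_of_add_eq_zero_left this

lemma antisA (ha : SatisfiesCAR a) (k : ℕ) (hk : 1 ≤ k) (hk1 : k ≠ 1) :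
    star (a k) * a 1 = -(a 1 * star (a k)) := by
  have := (ha 1 k le_rfl hk).1
  rw [if_neg (Ne.symm hk1)] at this
  exact eq_neg_of_add_eq_zero_right this

lemma antisB (ha : SatisfiesCAR a) (k : ℕ) (hk : 1 ≤ k) :
    star (a k) * star (a 1) = -(star (a 1) * star (a k)) := by
  have := star_anti (ha 1 k le_rfl hk).2
  exact eq_neg_of_add_eq_zero_right this

lemma commAp (ha : SatisfiesCAR a) (k : ℕ) (hk : 1 ≤ k) (hk1 : k ≠ 1) :
    a k * (a 1 * star (a 1)) = (a 1 * star (a 1)) * a k :=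
  comm_of_anti (antiA a ha k hk) (antiB a ha k hk hk1)

lemma commAq (ha : SatisfiesCAR a) (k : ℕ) (hk : 1 ≤ k) (hk1 : k ≠ 1) :
    a k * (star (a 1) * a 1) = (star (a 1) * a 1) * a k :=
  comm_of_anti (antiB a ha k hk hk1) (antiA a ha k hk)

lemma commsAp (ha : SatisfiesCAR a) (k : ℕ) (hk : 1 ≤ k) (hk1 : k ≠ 1) :
    star (a k) * (a 1 * star (a 1)) = (a 1 * star (a 1)) * star (a k) :=
  comm_of_anti (antisA a ha k hk hk1) (antisB a ha k hk)

lemma commsAq (ha : SatisfiesCAR a) (k : ℕ) (hk : 1 ≤ k) (hk1 : k ≠ 1) :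
    star (a k) * (star (a 1) * a 1) = (star (a 1) * a 1) * star (a k) :=
  comm_of_anti (antisB a ha k hk) (antisA a ha k hk hk1)

end CAR


section Mixed
variable {R : Type*} [Ring R] [StarRing R] (a : ℕ → R)

lemma starC (ha : SatisfiesCAR a) (hsq : a 1 * a 1 = 0) (n : ℕ) (hn : 1 ≤ n) :
    star (mixedC a n) = (-1 : R) ^ (n - 1) *
      (a 1 * star (a 1) * a (2 * n + 1) + star (a 1) * a 1 * star (a (2 * n + 1))) := by
  unfold mixedC
  simp only [star_mul, star_add, star_star, star_pow, star_neg, star_one]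
  rw [commAp a ha (2 * n + 1) (by omega) (by omega), commsAq a ha (2 * n + 1) (by omega) (by omega),
    neg_pow_comm]

lemma starD (ha : SatisfiesCAR a) (hsq : a 1 * a 1 = 0) (n : ℕ) (hn : 1 ≤ n) :
    star (mixedD a n) = (-1 : R) ^ (n - 1) *
      (a 1 * star (a 1) * star (a (2 * n)) - star (a 1) * a 1 * a (2 * n)) := by
  unfold mixedD
  simp only [star_mul, star_sub, star_star, star_pow, star_neg, star_one]
  rw [commsAp a ha (2 * n) (by omega) (by omega), commAq a ha (2 * n) (by omega) (by omega),
    neg_pow_comm]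

lemma relCC (ha : SatisfiesCAR a) (hsq : a 1 * a 1 = 0) (n m : ℕ) (hn : 1 ≤ n) (hm : 1 ≤ m) :
    mixedC a n * star (mixedC a m) + star (mixedC a m) * mixedC a n
      = if n = m then (1 : R) else 0 := by
  have hpp := pP2 (star_sq a hsq) (honeA a ha)
  have hqq := qQ2 hsq (honeA a ha)
  have hpq := pPqQ (α := a 1) (star_sq a hsq)
  have hqp := qQpP (β := star (a 1)) hsq
  rw [starC a ha hsq m hm]
  unfold mixedC
  rw [mixProd (n - 1) (m - 1) _ _ hpp hqq hpq hqp
      (commsAp a ha (2 * n + 1) (by omega) (by omega))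
      (commsAq a ha (2 * n + 1) (by omega) (by omega))
      (commAp a ha (2 * n + 1) (by omega) (by omega))
      (commAq a ha (2 * n + 1) (by omega) (by omega)),
    mixProd (m - 1) (n - 1) _ _ hpp hqq hpq hqp
      (commAp a ha (2 * m + 1) (by omega) (by omega))
      (commAq a ha (2 * m + 1) (by omega) (by omega))
      (commsAp a ha (2 * m + 1) (by omega) (by omega))
      (commsAq a ha (2 * m + 1) (by omega) (by omega)),
    Nat.add_comm (m - 1) (n - 1), combine]
  have hX : star (a (2 * n + 1)) * a (2 * m + 1) + a (2 * m + 1) * star (a (2 * n + 1))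
      = if n = m then (1 : R) else 0 := by
    have h := (ha (2 * m + 1) (2 * n + 1) (by omega) (by omega)).1
    rw [add_comm] at h
    rw [h]
    by_cases hc : n = m
    · rw [if_pos hc, if_pos (by omega)]
    · rw [if_neg (by omega), if_neg hc]
  have hY : a (2 * n + 1) * star (a (2 * m + 1)) + star (a (2 * m + 1)) * a (2 * n + 1)
      = if n = m then (1 : R) else 0 := by
    have h := (ha (2 * n + 1) (2 * m + 1) (by omega) (by omega)).1
    rw [h]
    by_cases hc : n = m
    · rw [if_pos hc, if_pos (by omega)]
    · rw [if_neg (by omega), if_neg hc]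
  rw [hX, hY]
  by_cases hc : n = m
  · subst hc
    rw [if_pos rfl, mul_one, mul_one, honeA a ha, mul_one, Even.neg_one_pow ⟨n - 1, rfl⟩]
  · rw [if_neg hc, mul_zero, mul_zero, add_zero, mul_zero]

lemma relDD (ha : SatisfiesCAR a) (hsq : a 1 * a 1 = 0) (n m : ℕ) (hn : 1 ≤ n) (hm : 1 ≤ m) :
    mixedD a n * star (mixedD a m) + star (mixedD a m) * mixedD a n
      = if n = m then (1 : R) else 0 := by
  have hpp := pP2 (star_sq a hsq) (honeA a ha)
  have hqq := qQ2 hsq (honeA a ha)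
  have hpq := pPqQ (α := a 1) (star_sq a hsq)
  have hqp := qQpP (β := star (a 1)) hsq
  rw [starD a ha hsq m hm]
  unfold mixedD
  rw [mixProd_mm (n - 1) (m - 1) _ _ hpp hqq hpq hqp
      (commAp a ha (2 * n) (by omega) (by omega))
      (commAq a ha (2 * n) (by omega) (by omega))
      (commsAp a ha (2 * n) (by omega) (by omega))
      (commsAq a ha (2 * n) (by omega) (by omega)),
    mixProd_mm (m - 1) (n - 1) _ _ hpp hqq hpq hqp
      (commsAp a ha (2 * m) (by omega) (by omega))
      (commsAq a ha (2 * m) (by omega) (by omega))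
      (commAp a ha (2 * m) (by omega) (by omega))
      (commAq a ha (2 * m) (by omega) (by omega)),
    Nat.add_comm (m - 1) (n - 1), combine]
  have hX : a (2 * n) * star (a (2 * m)) + star (a (2 * m)) * a (2 * n)
      = if n = m then (1 : R) else 0 := by
    have h := (ha (2 * n) (2 * m) (by omega) (by omega)).1
    rw [h]
    by_cases hc : n = m
    · rw [if_pos hc, if_pos (by omega)]
    · rw [if_neg (by omega), if_neg hc]
  have hY : star (a (2 * n)) * a (2 * m) + a (2 * m) * star (a (2 * n))
      = if n = m then (1 : R) else 0 := by
    have h := (ha (2 * m) (2 * n) (by omega) (by omega)).1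
    rw [add_comm] at h
    rw [h]
    by_cases hc : n = m
    · rw [if_pos hc, if_pos (by omega)]
    · rw [if_neg (by omega), if_neg hc]
  rw [hX, hY]
  by_cases hc : n = m
  · subst hc
    rw [if_pos rfl, mul_one, mul_one, honeA a ha, mul_one, Even.neg_one_pow ⟨n - 1, rfl⟩]
  · rw [if_neg hc, mul_zero, mul_zero, add_zero, mul_zero]

lemma relCD (ha : SatisfiesCAR a) (hsq : a 1 * a 1 = 0) (n m : ℕ) (hn : 1 ≤ n) (hm : 1 ≤ m) :
    mixedC a n * mixedD a m + mixedD a m * mixedC a n = 0 := by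
  have hpp := pP2 (star_sq a hsq) (honeA a ha)
  have hqq := qQ2 hsq (honeA a ha)
  have hpq := pPqQ (α := a 1) (star_sq a hsq)
  have hqp := qQpP (β := star (a 1)) hsq
  unfold mixedC mixedD
  rw [mixProd_pm (n - 1) (m - 1) _ _ hpp hqq hpq hqp
      (commsAp a ha (2 * n + 1) (by omega) (by omega))
      (commsAq a ha (2 * n + 1) (by omega) (by omega))
      (commAp a ha (2 * n + 1) (by omega) (by omega))
      (commAq a ha (2 * n + 1) (by omega) (by omega)),
    mixProd_mp (m - 1) (n - 1) _ _ hpp hqq hpq hqp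
      (commAp a ha (2 * m) (by omega) (by omega))
      (commAq a ha (2 * m) (by omega) (by omega))
      (commsAp a ha (2 * m) (by omega) (by omega))
      (commsAq a ha (2 * m) (by omega) (by omega)),
    Nat.add_comm (m - 1) (n - 1), combine_sub]
  have hX : star (a (2 * n + 1)) * a (2 * m) + a (2 * m) * star (a (2 * n + 1)) = (0 : R) := by
    have h := (ha (2 * m) (2 * n + 1) (by omega) (by omega)).1
    rw [if_neg (by omega)] at h
    rw [add_comm]
    exact h
  have hY : a (2 * n + 1) * star (a (2 * m)) + star (a (2 * m)) * a (2 * n + 1) = (0 : R) := by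
    have h := (ha (2 * n + 1) (2 * m) (by omega) (by omega)).1
    rw [if_neg (by omega)] at h
    exact h
  rw [hX, hY, mul_zero, mul_zero, sub_zero, mul_zero]

lemma relCDs (ha : SatisfiesCAR a) (hsq : a 1 * a 1 = 0) (n m : ℕ) (hn : 1 ≤ n) (hm : 1 ≤ m) :
    mixedC a n * star (mixedD a m) + star (mixedD a m) * mixedC a n = 0 := by
  have hpp := pP2 (star_sq a hsq) (honeA a ha)
  have hqq := qQ2 hsq (honeA a ha)
  have hpq := pPqQ (α := a 1) (star_sq a hsq)
  have hqp := qQpP (β := star (a 1)) hsq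
  rw [starD a ha hsq m hm]
  unfold mixedC
  rw [mixProd_pm (n - 1) (m - 1) _ _ hpp hqq hpq hqp
      (commsAp a ha (2 * n + 1) (by omega) (by omega))
      (commsAq a ha (2 * n + 1) (by omega) (by omega))
      (commAp a ha (2 * n + 1) (by omega) (by omega))
      (commAq a ha (2 * n + 1) (by omega) (by omega)),
    mixProd_mp (m - 1) (n - 1) _ _ hpp hqq hpq hqp
      (commsAp a ha (2 * m) (by omega) (by omega))
      (commsAq a ha (2 * m) (by omega) (by omega))
      (commAp a ha (2 * m) (by omega) (by omega))
      (commAq a ha (2 * m) (by omega) (by omega)),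
    Nat.add_comm (m - 1) (n - 1), combine_sub]
  have hX : star (a (2 * n + 1)) * star (a (2 * m)) + star (a (2 * m)) * star (a (2 * n + 1))
      = (0 : R) :=
    star_anti (ha (2 * n + 1) (2 * m) (by omega) (by omega)).2
  have hY : a (2 * n + 1) * a (2 * m) + a (2 * m) * a (2 * n + 1) = (0 : R) :=
    (ha (2 * n + 1) (2 * m) (by omega) (by omega)).2
  rw [hX, hY, mul_zero, mul_zero, sub_zero, mul_zero]


lemma commQC (ha : SatisfiesCAR a) (hsq : a 1 * a 1 = 0) (n : ℕ) (hn : 1 ≤ n) :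
    (star (a 1) * a 1) * mixedC a n = mixedC a n * (star (a 1) * a 1) := by
  unfold mixedC
  trans ((-1 : R) ^ (n - 1) *
    ((0 : R) * star (a (2 * n + 1)) + (star (a 1) * a 1) * a (2 * n + 1)))
  · rw [mulformL, qQpP (β := star (a 1)) hsq, qQ2 hsq (honeA a ha)]
  · rw [mulformR, commsAq a ha (2 * n + 1) (by omega) (by omega),
      commAq a ha (2 * n + 1) (by omega) (by omega),
      ← mul_assoc (a 1 * star (a 1)) (star (a 1) * a 1) (star (a (2 * n + 1))),
      ← mul_assoc (star (a 1) * a 1) (star (a 1) * a 1) (a (2 * n + 1)),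
      pPqQ (α := a 1) (star_sq a hsq), qQ2 hsq (honeA a ha)]

lemma commQD (ha : SatisfiesCAR a) (hsq : a 1 * a 1 = 0) (n : ℕ) (hn : 1 ≤ n) :
    (star (a 1) * a 1) * mixedD a n = mixedD a n * (star (a 1) * a 1) := by
  unfold mixedD
  trans ((-1 : R) ^ (n - 1) *
    ((0 : R) * a (2 * n) - (star (a 1) * a 1) * star (a (2 * n))))
  · rw [mulformLsub, qQpP (β := star (a 1)) hsq, qQ2 hsq (honeA a ha)]
  · rw [mulformRsub, commAq a ha (2 * n) (by omega) (by omega),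
      commsAq a ha (2 * n) (by omega) (by omega),
      ← mul_assoc (a 1 * star (a 1)) (star (a 1) * a 1) (a (2 * n)),
      ← mul_assoc (star (a 1) * a 1) (star (a 1) * a 1) (star (a (2 * n))),
      pPqQ (α := a 1) (star_sq a hsq), qQ2 hsq (honeA a ha)]

lemma intw1 (ha : SatisfiesCAR a) (hsq : a 1 * a 1 = 0) (n : ℕ) (hn : 1 ≤ n) :
    a 1 * mixedC a n = -(star (mixedC a n) * a 1) := by
  trans ((-1 : R) ^ (n - 1) * (a 1 * a (2 * n + 1)))
  · unfold mixedC
    rw [mulformL, αpP hsq, αqQ hsq (honeA a ha), zero_mul, zero_add]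
  · rw [starC a ha hsq n hn, mulformR, antiA a ha (2 * n + 1) (by omega),
      antisA a ha (2 * n + 1) (by omega) (by omega), mul_neg, mul_neg, ← neg_add, mul_neg,
      neg_neg, ← mul_assoc (a 1 * star (a 1)) (a 1) (a (2 * n + 1)),
      ← mul_assoc (star (a 1) * a 1) (a 1) (star (a (2 * n + 1))),
      pPα hsq (honeA a ha), qQα (β := star (a 1)) hsq, zero_mul, add_zero]

lemma intw2 (ha : SatisfiesCAR a) (hsq : a 1 * a 1 = 0) (n : ℕ) (hn : 1 ≤ n) :
    a 1 * star (mixedC a n) = -(mixedC a n * a 1) := by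
  trans ((-1 : R) ^ (n - 1) * (a 1 * star (a (2 * n + 1))))
  · rw [starC a ha hsq n hn, mulformL, αpP hsq, αqQ hsq (honeA a ha), zero_mul, zero_add]
  · unfold mixedC
    rw [mulformR, antisA a ha (2 * n + 1) (by omega) (by omega),
      antiA a ha (2 * n + 1) (by omega), mul_neg, mul_neg, ← neg_add, mul_neg,
      neg_neg, ← mul_assoc (a 1 * star (a 1)) (a 1) (star (a (2 * n + 1))),
      ← mul_assoc (star (a 1) * a 1) (a 1) (a (2 * n + 1)),
      pPα hsq (honeA a ha), qQα (β := star (a 1)) hsq, zero_mul, add_zero]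

lemma intw3 (ha : SatisfiesCAR a) (hsq : a 1 * a 1 = 0) (n : ℕ) (hn : 1 ≤ n) :
    a 1 * mixedD a n = star (mixedD a n) * a 1 := by
  trans ((-1 : R) ^ (n - 1) * (-(a 1 * star (a (2 * n)))))
  · unfold mixedD
    rw [mulformLsub, αpP hsq, αqQ hsq (honeA a ha), zero_mul, zero_sub]
  · rw [starD a ha hsq n hn, mulformRsub, antisA a ha (2 * n) (by omega) (by omega),
      antiA a ha (2 * n) (by omega), mul_neg (a 1 * star (a 1)) (a 1 * star (a (2 * n))),
      mul_neg (star (a 1) * a 1) (a 1 * a (2 * n)), sub_neg_eq_add,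
      ← mul_assoc (a 1 * star (a 1)) (a 1) (star (a (2 * n))),
      ← mul_assoc (star (a 1) * a 1) (a 1) (a (2 * n)),
      pPα hsq (honeA a ha), qQα (β := star (a 1)) hsq, zero_mul, add_zero]

lemma intw4 (ha : SatisfiesCAR a) (hsq : a 1 * a 1 = 0) (n : ℕ) (hn : 1 ≤ n) :
    a 1 * star (mixedD a n) = mixedD a n * a 1 := by
  trans ((-1 : R) ^ (n - 1) * (-(a 1 * a (2 * n))))
  · rw [starD a ha hsq n hn, mulformLsub, αpP hsq, αqQ hsq (honeA a ha), zero_mul, zero_sub]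
  · unfold mixedD
    rw [mulformRsub, antiA a ha (2 * n) (by omega),
      antisA a ha (2 * n) (by omega) (by omega), mul_neg (a 1 * star (a 1)) (a 1 * a (2 * n)),
      mul_neg (star (a 1) * a 1) (a 1 * star (a (2 * n))), sub_neg_eq_add,
      ← mul_assoc (a 1 * star (a 1)) (a 1) (a (2 * n)),
      ← mul_assoc (star (a 1) * a 1) (a 1) (star (a (2 * n))),
      pPα hsq (honeA a ha), qQα (β := star (a 1)) hsq, zero_mul, add_zero]

lemma rec1 (ha : SatisfiesCAR a) (hsq : a 1 * a 1 = 0) (n : ℕ) (hn : 1 ≤ n) :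
    (-1 : R) ^ (n - 1) *
      (a 1 * star (a 1) * mixedC a n + star (a 1) * a 1 * star (mixedC a n))
      = star (a (2 * n + 1)) := by
  have e1 : a 1 * star (a 1) * mixedC a n
      = (-1 : R) ^ (n - 1) * (a 1 * star (a 1) * star (a (2 * n + 1))) := by
    unfold mixedC
    rw [mulformL, pP2 (star_sq a hsq) (honeA a ha), pPqQ (α := a 1) (star_sq a hsq),
      zero_mul, add_zero]
  have e2 : star (a 1) * a 1 * star (mixedC a n)
      = (-1 : R) ^ (n - 1) * (star (a 1) * a 1 * star (a (2 * n + 1))) := by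
    rw [starC a ha hsq n hn, mulformL, qQpP (β := star (a 1)) hsq, qQ2 hsq (honeA a ha),
      zero_mul, zero_add]
  rw [e1, e2, ← mul_add, ← add_mul, honeA a ha, one_mul, ← mul_assoc, ← pow_add,
    Even.neg_one_pow ⟨n - 1, rfl⟩, one_mul]

lemma rec2 (ha : SatisfiesCAR a) (hsq : a 1 * a 1 = 0) (n : ℕ) (hn : 1 ≤ n) :
    (-1 : R) ^ (n - 1) *
      (a 1 * star (a 1) * mixedD a n - star (a 1) * a 1 * star (mixedD a n))
      = a (2 * n) := by
  have e1 : a 1 * star (a 1) * mixedD a n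
      = (-1 : R) ^ (n - 1) * (a 1 * star (a 1) * a (2 * n)) := by
    unfold mixedD
    rw [mulformLsub, pP2 (star_sq a hsq) (honeA a ha), pPqQ (α := a 1) (star_sq a hsq),
      zero_mul, sub_zero]
  have e2 : star (a 1) * a 1 * star (mixedD a n)
      = (-1 : R) ^ (n - 1) * (-(star (a 1) * a 1 * a (2 * n))) := by
    rw [starD a ha hsq n hn, mulformLsub, qQpP (β := star (a 1)) hsq, qQ2 hsq (honeA a ha),
      zero_mul, zero_sub]
  rw [e1, e2, mul_neg, sub_neg_eq_add, ← mul_add, ← add_mul, honeA a ha, one_mul,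
    ← mul_assoc, ← pow_add, Even.neg_one_pow ⟨n - 1, rfl⟩, one_mul]

lemma rec1' (ha : SatisfiesCAR a) (hsq : a 1 * a 1 = 0) (n : ℕ) (hn : 1 ≤ n) :
    (-1 : R) ^ (n - 1) *
      (star (mixedC a n) * (a 1 * star (a 1)) + mixedC a n * (star (a 1) * a 1))
      = a (2 * n + 1) := by
  have e1 : star (mixedC a n) * (a 1 * star (a 1))
      = (-1 : R) ^ (n - 1) * (a 1 * star (a 1) * a (2 * n + 1)) := by
    rw [starC a ha hsq n hn, mulformR, commAp a ha (2 * n + 1) (by omega) (by omega),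
      commsAp a ha (2 * n + 1) (by omega) (by omega),
      ← mul_assoc (a 1 * star (a 1)) (a 1 * star (a 1)) (a (2 * n + 1)),
      ← mul_assoc (star (a 1) * a 1) (a 1 * star (a 1)) (star (a (2 * n + 1))),
      pP2 (star_sq a hsq) (honeA a ha), qQpP (β := star (a 1)) hsq, zero_mul, add_zero]
  have e2 : mixedC a n * (star (a 1) * a 1)
      = (-1 : R) ^ (n - 1) * (star (a 1) * a 1 * a (2 * n + 1)) := by
    unfold mixedC
    rw [mulformR, commsAq a ha (2 * n + 1) (by omega) (by omega),
      commAq a ha (2 * n + 1) (by omega) (by omega),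
      ← mul_assoc (a 1 * star (a 1)) (star (a 1) * a 1) (star (a (2 * n + 1))),
      ← mul_assoc (star (a 1) * a 1) (star (a 1) * a 1) (a (2 * n + 1)),
      pPqQ (α := a 1) (star_sq a hsq), qQ2 hsq (honeA a ha), zero_mul, zero_add]
  rw [e1, e2, ← mul_add, ← add_mul, honeA a ha, one_mul, ← mul_assoc, ← pow_add,
    Even.neg_one_pow ⟨n - 1, rfl⟩, one_mul]

lemma rec2' (ha : SatisfiesCAR a) (hsq : a 1 * a 1 = 0) (n : ℕ) (hn : 1 ≤ n) :
    (-1 : R) ^ (n - 1) *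
      (star (mixedD a n) * (a 1 * star (a 1)) - mixedD a n * (star (a 1) * a 1))
      = star (a (2 * n)) := by
  have e1 : star (mixedD a n) * (a 1 * star (a 1))
      = (-1 : R) ^ (n - 1) * (a 1 * star (a 1) * star (a (2 * n))) := by
    rw [starD a ha hsq n hn, mulformRsub, commsAp a ha (2 * n) (by omega) (by omega),
      commAp a ha (2 * n) (by omega) (by omega),
      ← mul_assoc (a 1 * star (a 1)) (a 1 * star (a 1)) (star (a (2 * n))),
      ← mul_assoc (star (a 1) * a 1) (a 1 * star (a 1)) (a (2 * n)),
      pP2 (star_sq a hsq) (honeA a ha), qQpP (β := star (a 1)) hsq, zero_mul, sub_zero]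
  have e2 : mixedD a n * (star (a 1) * a 1)
      = (-1 : R) ^ (n - 1) * (-(star (a 1) * a 1 * star (a (2 * n)))) := by
    unfold mixedD
    rw [mulformRsub, commAq a ha (2 * n) (by omega) (by omega),
      commsAq a ha (2 * n) (by omega) (by omega),
      ← mul_assoc (a 1 * star (a 1)) (star (a 1) * a 1) (a (2 * n)),
      ← mul_assoc (star (a 1) * a 1) (star (a 1) * a 1) (star (a (2 * n))),
      pPqQ (α := a 1) (star_sq a hsq), qQ2 hsq (honeA a ha), zero_mul, zero_sub]
  rw [e1, e2, mul_neg, sub_neg_eq_add, ← mul_add, ← add_mul, honeA a ha, one_mul,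
    ← mul_assoc, ← pow_add, Even.neg_one_pow ⟨n - 1, rfl⟩, one_mul]

end Mixed


section Invariance
variable {H : Type*} [NormedAddCommGroup H] [InnerProductSpace ℂ H] [CompleteSpace H]

/-- generating set of a wedge space -/
def genSet (c d : ℕ → H →L[ℂ] H) (v : H) : Set H :=
  {x : H | ∃ K L : List ℕ, (∀ k ∈ K, 1 ≤ k) ∧ (∀ l ∈ L, 1 ≤ l) ∧
      x = ((K.map c).prod * (L.map fun l => star (d l)).prod) v}

lemma wedge_eq (c d : ℕ → H →L[ℂ] H) (v : H) :
    wedgeSpace c d v = (Submodule.span ℂ (genSet c d v)).topologicalClosure := rfl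

lemma span_to (T : H →L[ℂ] H) (s : Set H) (M : Submodule ℂ H)
    (h : ∀ x ∈ s, T x ∈ M) : ∀ x ∈ Submodule.span ℂ s, T x ∈ M := by
  intro x hx
  induction hx using Submodule.span_induction with
  | mem x hxs => exact h x hxs
  | zero => rw [map_zero]; exact zero_mem _
  | add x y _ _ hx hy => rw [map_add]; exact add_mem hx hy
  | smul t x _ hx => rw [map_smul]; exact Submodule.smul_mem _ _ hx

lemma closure_to (T : H →L[ℂ] H) (s : Set H) (M : Submodule ℂ H) (hM : IsClosed (M : Set H))
    (h : ∀ x ∈ Submodule.span ℂ s, T x ∈ M) :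
    ∀ x ∈ (Submodule.span ℂ s).topologicalClosure, T x ∈ M := by
  intro x hx
  have hmt : Set.MapsTo T (Submodule.span ℂ s : Set H) (M : Set H) := h
  have h2 := hmt.closure T.continuous
  have hx' : x ∈ closure (Submodule.span ℂ s : Set H) := by
    rw [← Submodule.topologicalClosure_coe]; exact hx
  have := h2 hx'
  rwa [hM.closure_eq] at this

section Ops
variable (c d : ℕ → H →L[ℂ] H) (v : H)

lemma mem_gen (K L : List ℕ) (hK : ∀ k ∈ K, 1 ≤ k) (hL : ∀ l ∈ L, 1 ≤ l) :
    ((K.map c).prod * (L.map fun l => star (d l)).prod) v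
      ∈ Submodule.span ℂ (genSet c d v) :=
  Submodule.subset_span ⟨K, L, hK, hL, rfl⟩

variable {c d v}

/-- creation by `c n` -/
lemma memC (n : ℕ) (hn : 1 ≤ n) :
    ∀ x ∈ Submodule.span ℂ (genSet c d v), c n x ∈ Submodule.span ℂ (genSet c d v) := by
  apply span_to
  rintro x ⟨K, L, hK, hL, rfl⟩
  refine Submodule.subset_span ⟨n :: K, L, ?_, hL, ?_⟩
  · intro k hk
    rcases List.mem_cons.mp hk with h | h
    · subst h; exact hn
    · exact hK _ h
  · simp only [List.map_cons, List.prod_cons, mul_assoc, ContinuousLinearMap.mul_apply]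

/-- creation by `star (d n)` -/
lemma memDs (n : ℕ) (hn : 1 ≤ n)
    (h1 : ∀ n k : ℕ, 1 ≤ n → 1 ≤ k → c k * star (d n) + star (d n) * c k = 0) :
    ∀ x ∈ Submodule.span ℂ (genSet c d v),
      star (d n) x ∈ Submodule.span ℂ (genSet c d v) := by
  apply span_to
  rintro x ⟨K, L, hK, hL, rfl⟩
  have hpass := pass_list (star (d n)) c c K (fun k hk => Or.inr
    (eq_neg_of_add_eq_zero_right (h1 n k hn (hK k hk))))
  have base : star (d n) * ((K.map c).prod * (L.map fun l => star (d l)).prod)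
      = ((K.map c).prod * ((n :: L).map fun l => star (d l)).prod) ∨
      star (d n) * ((K.map c).prod * (L.map fun l => star (d l)).prod)
      = -((K.map c).prod * ((n :: L).map fun l => star (d l)).prod) := by
    simp only [List.map_cons, List.prod_cons]
    rcases hpass with h | h
    · left; rw [← mul_assoc, h, mul_assoc]
    · right; rw [← mul_assoc, h, neg_mul, mul_assoc]
  have hmem := mem_gen c d v K (n :: L)
    hK (by intro l hl; rcases List.mem_cons.mp hl with h | h; · subst h; exact hn;
           · exact hL _ h)
  rw [← ContinuousLinearMap.mul_apply]
  rcases base with h | h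
  · rw [h]; exact hmem
  · rw [h, ContinuousLinearMap.neg_apply]; exact neg_mem hmem

/-- list of `c`'s applied -/
lemma memClist (K : List ℕ) (hK : ∀ k ∈ K, 1 ≤ k) :
    ∀ x ∈ Submodule.span ℂ (genSet c d v),
      (K.map c).prod x ∈ Submodule.span ℂ (genSet c d v) := by
  induction K with
  | nil => intro x hx; simpa using hx
  | cons k K ih =>
    intro x hx
    have h1 := ih (fun k hk => hK k (List.mem_cons_of_mem _ hk)) x hx
    have h2 := memC k (hK k (List.mem_cons_self)) _ h1
    simpa [List.map_cons, List.prod_cons, ContinuousLinearMap.mul_apply] using h2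

/-- list of `star d`'s applied -/
lemma memDslist
    (h1 : ∀ n k : ℕ, 1 ≤ n → 1 ≤ k → c k * star (d n) + star (d n) * c k = 0)
    (K : List ℕ) (hK : ∀ k ∈ K, 1 ≤ k) :
    ∀ x ∈ Submodule.span ℂ (genSet c d v),
      (K.map fun k => star (d k)).prod x ∈ Submodule.span ℂ (genSet c d v) := by
  induction K with
  | nil => intro x hx; simpa using hx
  | cons k K ih =>
    intro x hx
    have h2 := ih (fun k hk => hK k (List.mem_cons_of_mem _ hk)) x hx
    have h3 := memDs k (hK k (List.mem_cons_self)) h1 _ h2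
    simpa [List.map_cons, List.prod_cons, ContinuousLinearMap.mul_apply] using h3

/-- annihilation by `star (c n)` -/
lemma memCs (n : ℕ) (hn : 1 ≤ n)
    (h2 : ∀ n l : ℕ, 1 ≤ n → 1 ≤ l →
      star (c n) * star (d l) + star (d l) * star (c n) = 0)
    (h3 : ∀ n k : ℕ, 1 ≤ n → 1 ≤ k →
      star (c n) * c k + c k * star (c n) = if n = k then 1 else 0)
    (h4 : star (c n) v = 0) :
    ∀ x ∈ Submodule.span ℂ (genSet c d v),
      star (c n) x ∈ Submodule.span ℂ (genSet c d v) := by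
  apply span_to
  rintro x ⟨K, L, hK, hL, rfl⟩
  induction K generalizing L with
  | nil =>
    rcases pass_list (star (c n)) (fun l => star (d l)) (fun l => star (d l)) L
      (fun l hl => Or.inr (eq_neg_of_add_eq_zero_left (h2 n l hn (hL l hl)))) with h | h
    · rw [List.map_nil, List.prod_nil, one_mul, ← ContinuousLinearMap.mul_apply, h,
        ContinuousLinearMap.mul_apply, h4, map_zero]
      exact zero_mem _
    · rw [List.map_nil, List.prod_nil, one_mul, ← ContinuousLinearMap.mul_apply, h,
        ContinuousLinearMap.neg_apply, ContinuousLinearMap.mul_apply, h4, map_zero, neg_zero]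
      exact zero_mem _
  | cons k K ih =>
    have hk1 : 1 ≤ k := hK k (List.mem_cons_self)
    have hK' : ∀ j ∈ K, 1 ≤ j := fun j hj => hK j (List.mem_cons_of_mem _ hj)
    have hop : star (c n) * (c k * ((K.map c).prod * (L.map fun l => star (d l)).prod))
        = (if n = k then (1 : H →L[ℂ] H) else 0) *
            ((K.map c).prod * (L.map fun l => star (d l)).prod)
          - c k * (star (c n) * ((K.map c).prod * (L.map fun l => star (d l)).prod)) := by
      rw [← mul_assoc, eq_sub_of_add_eq (h3 n k hn hk1), sub_mul, mul_assoc]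
    rw [List.map_cons, List.prod_cons, mul_assoc, ← ContinuousLinearMap.mul_apply, hop]
    rw [ContinuousLinearMap.sub_apply, ContinuousLinearMap.mul_apply (c k),
      ContinuousLinearMap.mul_apply (star (c n))]
    refine sub_mem ?_ (memC k hk1 _ (ih L hK' hL))
    by_cases hc : n = k
    · rw [if_pos hc, one_mul]
      exact mem_gen c d v K L hK' hL
    · rw [if_neg hc, zero_mul, ContinuousLinearMap.zero_apply]
      exact zero_mem _

/-- annihilation by `d n` -/
lemma memD (n : ℕ) (hn : 1 ≤ n)
    (h1 : ∀ n k : ℕ, 1 ≤ n → 1 ≤ k → c k * star (d n) + star (d n) * c k = 0)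
    (h5 : ∀ n k : ℕ, 1 ≤ n → 1 ≤ k → d n * c k + c k * d n = 0)
    (h6 : ∀ n l : ℕ, 1 ≤ n → 1 ≤ l →
      d n * star (d l) + star (d l) * d n = if n = l then 1 else 0)
    (h7 : d n v = 0) :
    ∀ x ∈ Submodule.span ℂ (genSet c d v),
      d n x ∈ Submodule.span ℂ (genSet c d v) := by
  have inner : ∀ L : List ℕ, (∀ l ∈ L, 1 ≤ l) →
      d n ((L.map fun l => star (d l)).prod v) ∈ Submodule.span ℂ (genSet c d v) := by
    intro L
    induction L with
    | nil => intro _; simpa [h7] using zero_mem (Submodule.span ℂ (genSet c d v))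
    | cons l L ih =>
      intro hL
      have hl1 : 1 ≤ l := hL l (List.mem_cons_self)
      have hL' : ∀ j ∈ L, 1 ≤ j := fun j hj => hL j (List.mem_cons_of_mem _ hj)
      have hop : d n * (star (d l) * (L.map fun l => star (d l)).prod)
          = (if n = l then (1 : H →L[ℂ] H) else 0) * (L.map fun l => star (d l)).prod
            - star (d l) * (d n * (L.map fun l => star (d l)).prod) := by
        rw [← mul_assoc, eq_sub_of_add_eq (h6 n l hn hl1), sub_mul, mul_assoc]
      rw [List.map_cons, List.prod_cons, ← ContinuousLinearMap.mul_apply, hop,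
        ContinuousLinearMap.sub_apply, ContinuousLinearMap.mul_apply (star (d l)),
        ContinuousLinearMap.mul_apply (d n)]
      refine sub_mem ?_ (memDs l hl1 h1 _ (ih hL'))
      by_cases hc : n = l
      · rw [if_pos hc, one_mul]
        have := mem_gen c d v [] L (by simp) hL'
        simpa using this
      · rw [if_neg hc, zero_mul, ContinuousLinearMap.zero_apply]
        exact zero_mem _
  apply span_to
  rintro x ⟨K, L, hK, hL, rfl⟩
  have hpass := pass_list (d n) c c K (fun k hk => Or.inr
    (eq_neg_of_add_eq_zero_left (h5 n k hn (hK k hk))))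
  rw [← ContinuousLinearMap.mul_apply, ← mul_assoc]
  rcases hpass with h | h
  · rw [h, mul_assoc, ContinuousLinearMap.mul_apply, ContinuousLinearMap.mul_apply]
    exact memClist K hK _ (inner L hL)
  · rw [h, neg_mul, mul_assoc, ContinuousLinearMap.neg_apply, ContinuousLinearMap.mul_apply,
      ContinuousLinearMap.mul_apply]
    exact neg_mem (memClist K hK _ (inner L hL))

end Ops

end Invariance


lemma commStar {R : Type*} [Ring R] [StarRing R] {x y : R} (hx : star x = x)
    (h : x * y = y * x) : x * star y = star y * x := by
  have h2 := congrArg star h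
  rw [star_mul, star_mul, hx] at h2
  exact h2.symm

section Wedge2
variable {H : Type*} [NormedAddCommGroup H] [InnerProductSpace ℂ H] [CompleteSpace H]

lemma negPowApply : ∀ (k : ℕ) (T : H →L[ℂ] H) (w : H),
    ((-1 : H →L[ℂ] H) ^ k * T) w = (-1 : ℂ) ^ k • T w
  | 0, T, w => by simp
  | (m + 1), T, w => by
    rw [pow_succ, pow_succ, mul_assoc, neg_one_mul, negPowApply m (-T) w,
      ContinuousLinearMap.neg_apply, smul_neg, mul_neg_one, neg_smul]

lemma wedge_isClosed (c d : ℕ → H →L[ℂ] H) (v : H) :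
    IsClosed ((wedgeSpace c d v : Set H)) :=
  Submodule.isClosed_topologicalClosure _

lemma span_le_wedge (c d : ℕ → H →L[ℂ] H) (v : H) :
    Submodule.span ℂ (genSet c d v) ≤ wedgeSpace c d v :=
  Submodule.le_topologicalClosure _

lemma wedge_to (c d : ℕ → H →L[ℂ] H) (v : H) (T : H →L[ℂ] H) (M : Submodule ℂ H)
    (hM : IsClosed (M : Set H)) (h : ∀ x ∈ Submodule.span ℂ (genSet c d v), T x ∈ M) :
    ∀ x ∈ wedgeSpace c d v, T x ∈ M :=
  closure_to T _ M hM h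

lemma wedge_stable (c d : ℕ → H →L[ℂ] H) (v : H) (T : H →L[ℂ] H)
    (hT : ∀ x ∈ Submodule.span ℂ (genSet c d v), T x ∈ Submodule.span ℂ (genSet c d v)) :
    ∀ x ∈ wedgeSpace c d v, T x ∈ wedgeSpace c d v :=
  wedge_to c d v T _ (wedge_isClosed c d v) (fun x hx => span_le_wedge c d v (hT x hx))

lemma wedge_invariant (c d : ℕ → H →L[ℂ] H) (v : H)
    (h1 : ∀ n k : ℕ, 1 ≤ n → 1 ≤ k → c k * star (d n) + star (d n) * c k = 0)
    (h2 : ∀ n l : ℕ, 1 ≤ n → 1 ≤ l →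
      star (c n) * star (d l) + star (d l) * star (c n) = 0)
    (h3 : ∀ n k : ℕ, 1 ≤ n → 1 ≤ k →
      star (c n) * c k + c k * star (c n) = if n = k then 1 else 0)
    (h4 : ∀ n : ℕ, 1 ≤ n → star (c n) v = 0)
    (h5 : ∀ n k : ℕ, 1 ≤ n → 1 ≤ k → d n * c k + c k * d n = 0)
    (h6 : ∀ n l : ℕ, 1 ≤ n → 1 ≤ l →
      d n * star (d l) + star (d l) * d n = if n = l then 1 else 0)
    (h7 : ∀ n : ℕ, 1 ≤ n → d n v = 0) :
    ∀ n : ℕ, 1 ≤ n → ∀ x ∈ wedgeSpace c d v,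
      c n x ∈ wedgeSpace c d v ∧ d n x ∈ wedgeSpace c d v ∧
      star (c n) x ∈ wedgeSpace c d v ∧ star (d n) x ∈ wedgeSpace c d v := by
  intro n hn x hx
  exact ⟨wedge_stable c d v (c n) (memC n hn) x hx,
    wedge_stable c d v (d n) (memD n hn h1 h5 h6 (h7 n hn)) x hx,
    wedge_stable c d v (star (c n)) (memCs n hn h2 h3 (h4 n hn)) x hx,
    wedge_stable c d v (star (d n)) (memDs n hn h1) x hx⟩

end Wedge2

section SIntw
variable {R : Type*} [Ring R] [StarRing R] (a : ℕ → R)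

lemma sintw1 (ha : SatisfiesCAR a) (hsq : a 1 * a 1 = 0) (n : ℕ) (hn : 1 ≤ n) :
    star (a 1) * mixedC a n = -(star (mixedC a n) * star (a 1)) := by
  have h := congrArg star (intw1 a ha hsq n hn)
  simp only [star_mul, star_neg, star_star] at h
  rw [h, neg_neg]

lemma sintw2 (ha : SatisfiesCAR a) (hsq : a 1 * a 1 = 0) (n : ℕ) (hn : 1 ≤ n) :
    star (a 1) * star (mixedC a n) = -(mixedC a n * star (a 1)) := by
  have h := congrArg star (intw2 a ha hsq n hn)
  simp only [star_mul, star_neg, star_star] at h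
  rw [h, neg_neg]

lemma sintw3 (ha : SatisfiesCAR a) (hsq : a 1 * a 1 = 0) (n : ℕ) (hn : 1 ≤ n) :
    star (a 1) * mixedD a n = star (mixedD a n) * star (a 1) := by
  have h := congrArg star (intw3 a ha hsq n hn)
  simp only [star_mul, star_star] at h
  exact h.symm

lemma sintw4 (ha : SatisfiesCAR a) (hsq : a 1 * a 1 = 0) (n : ℕ) (hn : 1 ≤ n) :
    star (a 1) * star (mixedD a n) = mixedD a n * star (a 1) := by
  have h := congrArg star (intw4 a ha hsq n hn)
  simp only [star_mul, star_star] at h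
  exact h.symm

end SIntw


lemma ifSwap {R : Type*} [Ring R] (n k : ℕ) :
    (if k = n then (1 : R) else 0) = if n = k then 1 else 0 := by
  by_cases h : k = n
  · simp [h]
  · rw [if_neg h, if_neg (fun hh => h hh.symm)]

end FockProof

set_option maxHeartbeats 2000000 in
open FockProof in
theorem fock_decomposes_into_wedge_and_dual_wedge
    {H : Type*} [NormedAddCommGroup H] [InnerProductSpace ℂ H] [CompleteSpace H]
    (a : ℕ → H →L[ℂ] H) (ha : SatisfiesCAR a)
    (Ω : H) (hΩ : ‖Ω‖ = 1) (hvac : ∀ n : ℕ, 1 ≤ n → a n Ω = 0)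
    (hcyc : (Submodule.span ℂ {v : H | ∃ T ∈ StarAlgebra.adjoin ℂ
        {x : H →L[ℂ] H | ∃ n : ℕ, 1 ≤ n ∧ x = a n}, v = T Ω}).topologicalClosure = ⊤) :
    -- `V ⊥ V^*`
    (∀ x ∈ wedgeSpace (mixedC a) (mixedD a) Ω,
      ∀ y ∈ wedgeSpace (mixedD a) (mixedC a) (star (a 1) Ω), (inner ℂ x y : ℂ) = 0)
    -- `V` is invariant under all `c_n, d_n, c_n^*, d_n^*`
    ∧ (∀ n : ℕ, 1 ≤ n → ∀ x ∈ wedgeSpace (mixedC a) (mixedD a) Ω,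
        mixedC a n x ∈ wedgeSpace (mixedC a) (mixedD a) Ω
        ∧ mixedD a n x ∈ wedgeSpace (mixedC a) (mixedD a) Ω
        ∧ star (mixedC a n) x ∈ wedgeSpace (mixedC a) (mixedD a) Ω
        ∧ star (mixedD a n) x ∈ wedgeSpace (mixedC a) (mixedD a) Ω)
    -- `V^*` is invariant under all `c_n, d_n, c_n^*, d_n^*`
    ∧ (∀ n : ℕ, 1 ≤ n → ∀ x ∈ wedgeSpace (mixedD a) (mixedC a) (star (a 1) Ω),
        mixedC a n x ∈ wedgeSpace (mixedD a) (mixedC a) (star (a 1) Ω)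
        ∧ mixedD a n x ∈ wedgeSpace (mixedD a) (mixedC a) (star (a 1) Ω)
        ∧ star (mixedC a n) x ∈ wedgeSpace (mixedD a) (mixedC a) (star (a 1) Ω)
        ∧ star (mixedD a n) x ∈ wedgeSpace (mixedD a) (mixedC a) (star (a 1) Ω))
    -- `H = V ⊕ V^*`
    ∧ wedgeSpace (mixedC a) (mixedD a) Ω
        ⊔ wedgeSpace (mixedD a) (mixedC a) (star (a 1) Ω) = ⊤ := by
  classical
  -- abbreviations
  set Ωs := star (a 1) Ω with hΩsdef
  -- a 1 is square-zero
  have hsq : a 1 * a 1 = 0 := by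
    have h := (ha 1 1 le_rfl le_rfl).2
    ext w
    have h2 := congrArg (fun T : H →L[ℂ] H => T w) h
    simp only [ContinuousLinearMap.add_apply, ContinuousLinearMap.zero_apply] at h2
    have h3 : (2 : ℂ) • ((a 1 * a 1) w) = 0 := by rw [two_smul]; exact h2
    have h4 := (smul_eq_zero.mp h3).resolve_left (by norm_num)
    simpa using h4
  -- vacuum vector facts
  have hα : a 1 Ω = 0 := hvac 1 le_rfl
  have hq0 : (star (a 1) * a 1) Ω = 0 := by
    rw [ContinuousLinearMap.mul_apply, hα, map_zero]
  have hp1 : (a 1 * star (a 1)) Ω = Ω := by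
    have h := congrArg (fun T : H →L[ℂ] H => T Ω) (honeA a ha)
    simp only [ContinuousLinearMap.add_apply, ContinuousLinearMap.one_apply] at h
    rw [hq0, add_zero] at h
    exact h
  have hαΩs : a 1 Ωs = Ω := by
    rw [hΩsdef, ← ContinuousLinearMap.mul_apply]; exact hp1
  have hsαΩs : star (a 1) Ωs = 0 := by
    rw [hΩsdef, ← ContinuousLinearMap.mul_apply, star_sq a hsq,
      ContinuousLinearMap.zero_apply]
  -- operator vacuum facts
  have hvCs : ∀ n : ℕ, 1 ≤ n → star (mixedC a n) Ω = 0 := by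
    intro n hn
    rw [starC a ha hsq n hn, negPowApply, ContinuousLinearMap.add_apply,
      ContinuousLinearMap.mul_apply, hvac (2 * n + 1) (by omega), map_zero,
      ← commsAq a ha (2 * n + 1) (by omega) (by omega), ContinuousLinearMap.mul_apply,
      hq0, map_zero, add_zero, smul_zero]
  have hvD : ∀ n : ℕ, 1 ≤ n → mixedD a n Ω = 0 := by
    intro n hn
    unfold mixedD
    rw [negPowApply, ContinuousLinearMap.sub_apply, ContinuousLinearMap.mul_apply,
      hvac (2 * n) (by omega), map_zero,
      ← commsAq a ha (2 * n) (by omega) (by omega), ContinuousLinearMap.mul_apply,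
      hq0, map_zero, sub_zero, smul_zero]
  have hvC' : ∀ n : ℕ, 1 ≤ n → mixedC a n Ωs = 0 := by
    intro n hn
    have hop : mixedC a n * star (a 1)
        = (-1 : H →L[ℂ] H) ^ (n - 1) * (-(star (a 1) * a (2 * n + 1))) := by
      unfold mixedC
      rw [mulformR, antisB a ha (2 * n + 1) (by omega), antiB a ha (2 * n + 1) (by omega)
        (by omega), mul_neg (a 1 * star (a 1)), mul_neg (star (a 1) * a 1), ← neg_add,
        ← mul_assoc (a 1 * star (a 1)) (star (a 1)) (star (a (2 * n + 1))),
        ← mul_assoc (star (a 1) * a 1) (star (a 1)) (a (2 * n + 1)),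
        pPβ (star_sq a hsq), qQβ (star_sq a hsq) (honeA a ha), zero_mul, zero_add]
    rw [hΩsdef, ← ContinuousLinearMap.mul_apply, hop, mul_neg, ContinuousLinearMap.neg_apply,
      negPowApply, ContinuousLinearMap.mul_apply, hvac (2 * n + 1) (by omega), map_zero,
      smul_zero, neg_zero]
  have hvDs' : ∀ n : ℕ, 1 ≤ n → star (mixedD a n) Ωs = 0 := by
    intro n hn
    have hop : star (mixedD a n) * star (a 1)
        = (-1 : H →L[ℂ] H) ^ (n - 1) * (star (a 1) * a (2 * n)) := by
      rw [starD a ha hsq n hn, mulformRsub, antisB a ha (2 * n) (by omega),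
        antiB a ha (2 * n) (by omega) (by omega), mul_neg (a 1 * star (a 1)),
        mul_neg (star (a 1) * a 1), sub_neg_eq_add,
        ← mul_assoc (a 1 * star (a 1)) (star (a 1)) (star (a (2 * n))),
        ← mul_assoc (star (a 1) * a 1) (star (a 1)) (a (2 * n)),
        pPβ (star_sq a hsq), qQβ (star_sq a hsq) (honeA a ha), zero_mul, neg_zero, zero_add]
    rw [hΩsdef, ← ContinuousLinearMap.mul_apply, hop, negPowApply,
      ContinuousLinearMap.mul_apply, hvac (2 * n) (by omega), map_zero, smul_zero]
  -- invariance of V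
  have inv1 := wedge_invariant (mixedC a) (mixedD a) Ω
    (fun n k hn hk => relCDs a ha hsq k n hk hn)
    (fun n l hn hl => star_anti (relCD a ha hsq n l hn hl))
    (fun n k hn hk => by
      have h := relCC a ha hsq k n hk hn
      rw [add_comm, ifSwap] at h
      exact h)
    hvCs
    (fun n k hn hk => by
      have h := relCD a ha hsq k n hk hn
      rwa [add_comm] at h)
    (fun n l hn hl => relDD a ha hsq n l hn hl)
    hvD
  -- invariance of V'
  have inv2 := wedge_invariant (mixedD a) (mixedC a) Ωs
    (fun n k hn hk => star_anti2 (relCDs a ha hsq n k hn hk))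
    (fun n l hn hl => by
      have h := star_anti (relCD a ha hsq l n hl hn)
      rwa [add_comm] at h)
    (fun n k hn hk => by
      have h := relDD a ha hsq k n hk hn
      rw [add_comm, ifSwap] at h
      exact h)
    hvDs'
    (fun n k hn hk => relCD a ha hsq n k hn hk)
    (fun n l hn hl => relCC a ha hsq n l hn hl)
    hvC'
  -- orthogonality via the projection Q = a1* a1
  have hQsa : star (star (a 1) * a 1) = star (a 1) * a 1 := by
    rw [star_mul, star_star]
  have hQV : ∀ x ∈ wedgeSpace (mixedC a) (mixedD a) Ω, (star (a 1) * a 1) x = 0 := by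
    have hle : wedgeSpace (mixedC a) (mixedD a) Ω
        ≤ LinearMap.ker ((star (a 1) * a 1 : H →L[ℂ] H) : H →ₗ[ℂ] H) := by
      rw [wedge_eq]
      refine Submodule.topologicalClosure_minimal _ (Submodule.span_le.mpr ?_)
        (ContinuousLinearMap.isClosed_ker _)
      rintro y ⟨K, L, hK, hL, rfl⟩
      have hcomm : Commute ((star (a 1) * a 1))
          ((K.map (mixedC a)).prod * (L.map fun l => star (mixedD a l)).prod) := by
        refine Commute.mul_right ?_ ?_
        · refine Commute.list_prod_right _ _ ?_
          intro z hz
          obtain ⟨k, hk, rfl⟩ := List.mem_map.mp hz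
          exact commQC a ha hsq k (hK k hk)
        · refine Commute.list_prod_right _ _ ?_
          intro z hz
          obtain ⟨l, hl, rfl⟩ := List.mem_map.mp hz
          exact commStar hQsa (commQD a ha hsq l (hL l hl))
      rw [SetLike.mem_coe, LinearMap.mem_ker, ContinuousLinearMap.coe_coe, ← ContinuousLinearMap.mul_apply, hcomm.eq,
        ContinuousLinearMap.mul_apply, hq0, map_zero]
    exact fun x hx => LinearMap.mem_ker.mp (hle hx)
  have hQV' : ∀ y ∈ wedgeSpace (mixedD a) (mixedC a) Ωs, (star (a 1) * a 1) y = y := by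
    have hqΩs : (star (a 1) * a 1) Ωs = Ωs := by
      rw [hΩsdef, ← ContinuousLinearMap.mul_apply, qQβ (star_sq a hsq) (honeA a ha)]
    have hle : wedgeSpace (mixedD a) (mixedC a) Ωs
        ≤ LinearMap.ker ((star (a 1) * a 1 - 1 : H →L[ℂ] H) : H →ₗ[ℂ] H) := by
      rw [wedge_eq]
      refine Submodule.topologicalClosure_minimal _ (Submodule.span_le.mpr ?_)
        (ContinuousLinearMap.isClosed_ker _)
      rintro z ⟨K, L, hK, hL, rfl⟩
      have hcomm : Commute ((star (a 1) * a 1))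
          ((K.map (mixedD a)).prod * (L.map fun l => star (mixedC a l)).prod) := by
        refine Commute.mul_right ?_ ?_
        · refine Commute.list_prod_right _ _ ?_
          intro z hz
          obtain ⟨k, hk, rfl⟩ := List.mem_map.mp hz
          exact commQD a ha hsq k (hK k hk)
        · refine Commute.list_prod_right _ _ ?_
          intro z hz
          obtain ⟨l, hl, rfl⟩ := List.mem_map.mp hz
          exact commStar hQsa (commQC a ha hsq l (hL l hl))
      rw [SetLike.mem_coe, LinearMap.mem_ker, ContinuousLinearMap.coe_coe, ContinuousLinearMap.sub_apply,
        ContinuousLinearMap.one_apply, sub_eq_zero, ← ContinuousLinearMap.mul_apply, hcomm.eq,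
        ContinuousLinearMap.mul_apply, hqΩs]
    intro y hy
    have h2 := LinearMap.mem_ker.mp (hle hy)
    rw [ContinuousLinearMap.coe_coe, ContinuousLinearMap.sub_apply, ContinuousLinearMap.one_apply, sub_eq_zero] at h2
    exact h2
  have horthog : ∀ x ∈ wedgeSpace (mixedC a) (mixedD a) Ω,
      ∀ y ∈ wedgeSpace (mixedD a) (mixedC a) Ωs, (inner ℂ x y : ℂ) = 0 := by
    intro x hx y hy
    have hadj : ContinuousLinearMap.adjoint (star (a 1) * a 1) = star (a 1) * a 1 := by
      rw [← ContinuousLinearMap.star_eq_adjoint, hQsa]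
    calc (inner ℂ x y : ℂ) = inner ℂ x ((star (a 1) * a 1) y) := by rw [hQV' y hy]
      _ = inner ℂ ((star (a 1) * a 1) x) y := by
          rw [← hadj, ContinuousLinearMap.adjoint_inner_right, hadj]
      _ = 0 := by rw [hQV x hx, inner_zero_left]
  refine ⟨horthog, inv1, fun n hn x hx => ⟨(inv2 n hn x hx).2.1, (inv2 n hn x hx).1,
    (inv2 n hn x hx).2.2.2, (inv2 n hn x hx).2.2.1⟩, ?_⟩
  -- Totality
  have hΩV : Ω ∈ wedgeSpace (mixedC a) (mixedD a) Ω := by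
    apply span_le_wedge
    have := mem_gen (mixedC a) (mixedD a) Ω [] [] (by simp) (by simp)
    simpa using this
  have hαV : ∀ x ∈ wedgeSpace (mixedC a) (mixedD a) Ω,
      a 1 x ∈ wedgeSpace (mixedC a) (mixedD a) Ω := by
    apply wedge_to _ _ _ _ _ (wedge_isClosed _ _ _)
    apply span_to
    rintro x ⟨K, L, hK, hL, rfl⟩
    rcases pass_word (a 1) (mixedC a) (fun k => star (mixedC a k))
        (fun l => star (mixedD a l)) (mixedD a) K L
        (fun k hk => Or.inr (intw1 a ha hsq k (hK k hk)))
        (fun l hl => Or.inl (intw4 a ha hsq l (hL l hl))) with h | h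
    · rw [← ContinuousLinearMap.mul_apply, h, ContinuousLinearMap.mul_apply, hα, map_zero]
      exact zero_mem _
    · rw [← ContinuousLinearMap.mul_apply, h, ContinuousLinearMap.neg_apply,
        ContinuousLinearMap.mul_apply, hα, map_zero, neg_zero]
      exact zero_mem _
  have hsαV : ∀ x ∈ wedgeSpace (mixedC a) (mixedD a) Ω,
      star (a 1) x ∈ wedgeSpace (mixedD a) (mixedC a) Ωs := by
    apply wedge_to _ _ _ _ _ (wedge_isClosed _ _ _)
    apply span_to
    rintro x ⟨K, L, hK, hL, rfl⟩
    have hinner : (L.map (mixedD a)).prod Ωs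
        ∈ Submodule.span ℂ (genSet (mixedD a) (mixedC a) Ωs) := by
      have := mem_gen (mixedD a) (mixedC a) Ωs L [] hL (by simp)
      simpa using this
    have houter := memDslist (c := mixedD a) (d := mixedC a) (v := Ωs)
      (fun n k hn hk => star_anti2 (relCDs a ha hsq n k hn hk)) K hK _ hinner
    rcases pass_word (star (a 1)) (mixedC a) (fun k => star (mixedC a k))
        (fun l => star (mixedD a l)) (mixedD a) K L
        (fun k hk => Or.inr (sintw1 a ha hsq k (hK k hk)))
        (fun l hl => Or.inl (sintw4 a ha hsq l (hL l hl))) with h | h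
    · rw [← ContinuousLinearMap.mul_apply, h, ContinuousLinearMap.mul_apply,
        ContinuousLinearMap.mul_apply, ← hΩsdef]
      exact span_le_wedge _ _ _ houter
    · rw [← ContinuousLinearMap.mul_apply, h, ContinuousLinearMap.neg_apply,
        ContinuousLinearMap.mul_apply, ContinuousLinearMap.mul_apply, ← hΩsdef]
      exact neg_mem (span_le_wedge _ _ _ houter)
  have hαV' : ∀ x ∈ wedgeSpace (mixedD a) (mixedC a) Ωs,
      a 1 x ∈ wedgeSpace (mixedC a) (mixedD a) Ω := by
    apply wedge_to _ _ _ _ _ (wedge_isClosed _ _ _)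
    apply span_to
    rintro x ⟨K, L, hK, hL, rfl⟩
    have hinner : (L.map (mixedC a)).prod Ω
        ∈ Submodule.span ℂ (genSet (mixedC a) (mixedD a) Ω) := by
      have := mem_gen (mixedC a) (mixedD a) Ω L [] hL (by simp)
      simpa using this
    have houter := memDslist (c := mixedC a) (d := mixedD a) (v := Ω)
      (fun n k hn hk => relCDs a ha hsq k n hk hn) K hK _ hinner
    rcases pass_word (a 1) (mixedD a) (fun k => star (mixedD a k))
        (fun l => star (mixedC a l)) (mixedC a) K L
        (fun k hk => Or.inl (intw3 a ha hsq k (hK k hk)))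
        (fun l hl => Or.inr (intw2 a ha hsq l (hL l hl))) with h | h
    · rw [← ContinuousLinearMap.mul_apply, h, ContinuousLinearMap.mul_apply,
        ContinuousLinearMap.mul_apply, hαΩs]
      exact span_le_wedge _ _ _ houter
    · rw [← ContinuousLinearMap.mul_apply, h, ContinuousLinearMap.neg_apply,
        ContinuousLinearMap.mul_apply, ContinuousLinearMap.mul_apply, hαΩs]
      exact neg_mem (span_le_wedge _ _ _ houter)
  have hsαV' : ∀ x ∈ wedgeSpace (mixedD a) (mixedC a) Ωs,
      star (a 1) x ∈ wedgeSpace (mixedD a) (mixedC a) Ωs := by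
    apply wedge_to _ _ _ _ _ (wedge_isClosed _ _ _)
    apply span_to
    rintro x ⟨K, L, hK, hL, rfl⟩
    rcases pass_word (star (a 1)) (mixedD a) (fun k => star (mixedD a k))
        (fun l => star (mixedC a l)) (mixedC a) K L
        (fun k hk => Or.inl (sintw3 a ha hsq k (hK k hk)))
        (fun l hl => Or.inr (sintw2 a ha hsq l (hL l hl))) with h | h
    · rw [← ContinuousLinearMap.mul_apply, h, ContinuousLinearMap.mul_apply, hsαΩs, map_zero]
      exact zero_mem _
    · rw [← ContinuousLinearMap.mul_apply, h, ContinuousLinearMap.neg_apply,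
        ContinuousLinearMap.mul_apply, hsαΩs, map_zero, neg_zero]
      exact zero_mem _
  have mtα : ∀ x ∈ (wedgeSpace (mixedC a) (mixedD a) Ω ⊔ wedgeSpace (mixedD a) (mixedC a) Ωs), a 1 x ∈ (wedgeSpace (mixedC a) (mixedD a) Ω ⊔ wedgeSpace (mixedD a) (mixedC a) Ωs) := by
    intro x hx
    obtain ⟨y, hy, w, hw, rfl⟩ := Submodule.mem_sup.mp hx
    rw [map_add]
    exact add_mem (Submodule.mem_sup_left (hαV y hy)) (Submodule.mem_sup_left (hαV' w hw))
  have mtsα : ∀ x ∈ (wedgeSpace (mixedC a) (mixedD a) Ω ⊔ wedgeSpace (mixedD a) (mixedC a) Ωs), star (a 1) x ∈ (wedgeSpace (mixedC a) (mixedD a) Ω ⊔ wedgeSpace (mixedD a) (mixedC a) Ωs) := by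
    intro x hx
    obtain ⟨y, hy, w, hw, rfl⟩ := Submodule.mem_sup.mp hx
    rw [map_add]
    exact add_mem (Submodule.mem_sup_right (hsαV y hy)) (Submodule.mem_sup_right (hsαV' w hw))
  have mtc : ∀ n : ℕ, 1 ≤ n → ∀ x ∈ (wedgeSpace (mixedC a) (mixedD a) Ω ⊔ wedgeSpace (mixedD a) (mixedC a) Ωs), mixedC a n x ∈ (wedgeSpace (mixedC a) (mixedD a) Ω ⊔ wedgeSpace (mixedD a) (mixedC a) Ωs) := by
    intro n hn x hx
    obtain ⟨y, hy, w, hw, rfl⟩ := Submodule.mem_sup.mp hx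
    rw [map_add]
    exact add_mem (Submodule.mem_sup_left ((inv1 n hn y hy).1))
      (Submodule.mem_sup_right ((inv2 n hn w hw).2.1))
  have mtd : ∀ n : ℕ, 1 ≤ n → ∀ x ∈ (wedgeSpace (mixedC a) (mixedD a) Ω ⊔ wedgeSpace (mixedD a) (mixedC a) Ωs), mixedD a n x ∈ (wedgeSpace (mixedC a) (mixedD a) Ω ⊔ wedgeSpace (mixedD a) (mixedC a) Ωs) := by
    intro n hn x hx
    obtain ⟨y, hy, w, hw, rfl⟩ := Submodule.mem_sup.mp hx
    rw [map_add]
    exact add_mem (Submodule.mem_sup_left ((inv1 n hn y hy).2.1))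
      (Submodule.mem_sup_right ((inv2 n hn w hw).1))
  have mtcs : ∀ n : ℕ, 1 ≤ n → ∀ x ∈ (wedgeSpace (mixedC a) (mixedD a) Ω ⊔ wedgeSpace (mixedD a) (mixedC a) Ωs), star (mixedC a n) x ∈ (wedgeSpace (mixedC a) (mixedD a) Ω ⊔ wedgeSpace (mixedD a) (mixedC a) Ωs) := by
    intro n hn x hx
    obtain ⟨y, hy, w, hw, rfl⟩ := Submodule.mem_sup.mp hx
    rw [map_add]
    exact add_mem (Submodule.mem_sup_left ((inv1 n hn y hy).2.2.1))
      (Submodule.mem_sup_right ((inv2 n hn w hw).2.2.2))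
  have mtds : ∀ n : ℕ, 1 ≤ n → ∀ x ∈ (wedgeSpace (mixedC a) (mixedD a) Ω ⊔ wedgeSpace (mixedD a) (mixedC a) Ωs), star (mixedD a n) x ∈ (wedgeSpace (mixedC a) (mixedD a) Ω ⊔ wedgeSpace (mixedD a) (mixedC a) Ωs) := by
    intro n hn x hx
    obtain ⟨y, hy, w, hw, rfl⟩ := Submodule.mem_sup.mp hx
    rw [map_add]
    exact add_mem (Submodule.mem_sup_left ((inv1 n hn y hy).2.2.2))
      (Submodule.mem_sup_right ((inv2 n hn w hw).2.2.1))
  have mta : ∀ m : ℕ, 1 ≤ m →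
      (∀ x ∈ (wedgeSpace (mixedC a) (mixedD a) Ω ⊔ wedgeSpace (mixedD a) (mixedC a) Ωs), a m x ∈ (wedgeSpace (mixedC a) (mixedD a) Ω ⊔ wedgeSpace (mixedD a) (mixedC a) Ωs)) ∧ (∀ x ∈ (wedgeSpace (mixedC a) (mixedD a) Ω ⊔ wedgeSpace (mixedD a) (mixedC a) Ωs), star (a m) x ∈ (wedgeSpace (mixedC a) (mixedD a) Ω ⊔ wedgeSpace (mixedD a) (mixedC a) Ωs)) := by
    intro m hm
    rcases Nat.even_or_odd m with ⟨t, ht⟩ | ⟨t, ht⟩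
    · have ht1 : 1 ≤ t := by omega
      have hm2 : m = 2 * t := by omega
      subst hm2
      constructor
      · intro x hx
        rw [← rec2 a ha hsq t ht1, negPowApply]
        simp only [ContinuousLinearMap.sub_apply, ContinuousLinearMap.mul_apply]
        exact Submodule.smul_mem _ _ (sub_mem (mtα _ (mtsα _ (mtd t ht1 x hx)))
          (mtsα _ (mtα _ (mtds t ht1 x hx))))
      · intro x hx
        rw [← rec2' a ha hsq t ht1, negPowApply]
        simp only [ContinuousLinearMap.sub_apply, ContinuousLinearMap.mul_apply]
        exact Submodule.smul_mem _ _ (sub_mem (mtds t ht1 _ (mtα _ (mtsα x hx)))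
          (mtd t ht1 _ (mtsα _ (mtα x hx))))
    · by_cases ht0 : t = 0
      · have hm1 : m = 1 := by omega
        subst hm1
        exact ⟨mtα, mtsα⟩
      · have ht1 : 1 ≤ t := by omega
        have hm2 : m = 2 * t + 1 := by omega
        subst hm2
        constructor
        · intro x hx
          rw [← rec1' a ha hsq t ht1, negPowApply]
          simp only [ContinuousLinearMap.add_apply, ContinuousLinearMap.mul_apply]
          exact Submodule.smul_mem _ _ (add_mem (mtcs t ht1 _ (mtα _ (mtsα x hx)))
            (mtc t ht1 _ (mtsα _ (mtα x hx))))
        · intro x hx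
          rw [← rec1 a ha hsq t ht1, negPowApply]
          simp only [ContinuousLinearMap.add_apply, ContinuousLinearMap.mul_apply]
          exact Submodule.smul_mem _ _ (add_mem (mtα _ (mtsα _ (mtc t ht1 x hx)))
            (mtsα _ (mtα _ (mtcs t ht1 x hx))))
  have key : ∀ T ∈ StarAlgebra.adjoin ℂ {x : H →L[ℂ] H | ∃ n : ℕ, 1 ≤ n ∧ x = a n},
      (∀ x ∈ (wedgeSpace (mixedC a) (mixedD a) Ω ⊔ wedgeSpace (mixedD a) (mixedC a) Ωs), T x ∈ (wedgeSpace (mixedC a) (mixedD a) Ω ⊔ wedgeSpace (mixedD a) (mixedC a) Ωs)) ∧ (∀ x ∈ (wedgeSpace (mixedC a) (mixedD a) Ω ⊔ wedgeSpace (mixedD a) (mixedC a) Ωs), star T x ∈ (wedgeSpace (mixedC a) (mixedD a) Ω ⊔ wedgeSpace (mixedD a) (mixedC a) Ωs)) := by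
    intro T hT
    induction hT using StarAlgebra.adjoin_induction with
    | mem x hx =>
      obtain ⟨n, hn, rfl⟩ := hx
      exact mta n hn
    | algebraMap r =>
      constructor
      · intro x hx
        rw [Algebra.algebraMap_eq_smul_one, ContinuousLinearMap.smul_apply,
          ContinuousLinearMap.one_apply]
        exact Submodule.smul_mem _ _ hx
      · intro x hx
        rw [Algebra.algebraMap_eq_smul_one, star_smul, star_one,
          ContinuousLinearMap.smul_apply, ContinuousLinearMap.one_apply]
        exact Submodule.smul_mem _ _ hx
    | add x y hx hy ihx ihy =>
      refine ⟨fun w hw => ?_, fun w hw => ?_⟩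
      · rw [ContinuousLinearMap.add_apply]; exact add_mem (ihx.1 w hw) (ihy.1 w hw)
      · rw [star_add, ContinuousLinearMap.add_apply]
        exact add_mem (ihx.2 w hw) (ihy.2 w hw)
    | mul x y hx hy ihx ihy =>
      refine ⟨fun w hw => ?_, fun w hw => ?_⟩
      · rw [ContinuousLinearMap.mul_apply]; exact ihx.1 _ (ihy.1 w hw)
      · rw [star_mul, ContinuousLinearMap.mul_apply]; exact ihy.2 _ (ihx.2 w hw)
    | star x hx ihx => exact ⟨ihx.2, by rw [star_star]; exact ihx.1⟩
  have hΩW : Ω ∈ (wedgeSpace (mixedC a) (mixedD a) Ω ⊔ wedgeSpace (mixedD a) (mixedC a) Ωs) := Submodule.mem_sup_left hΩV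
  have hdense : ((wedgeSpace (mixedC a) (mixedD a) Ω ⊔ wedgeSpace (mixedD a) (mixedC a) Ωs) : Submodule ℂ H).topologicalClosure = ⊤ := by
    have hle : Submodule.span ℂ {v : H | ∃ T ∈ StarAlgebra.adjoin ℂ
        {x : H →L[ℂ] H | ∃ n : ℕ, 1 ≤ n ∧ x = a n}, v = T Ω} ≤ (wedgeSpace (mixedC a) (mixedD a) Ω ⊔ wedgeSpace (mixedD a) (mixedC a) Ωs) := by
      rw [Submodule.span_le]
      rintro x ⟨T, hT, rfl⟩
      exact (key T hT).1 Ω hΩW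
    exact top_unique (hcyc ▸ Submodule.topologicalClosure_mono hle)
  have horth_bot : ((wedgeSpace (mixedC a) (mixedD a) Ω ⊔ wedgeSpace (mixedD a) (mixedC a) Ωs) : Submodule ℂ H)ᗮ = ⊥ :=
    Submodule.topologicalClosure_eq_top_iff.mp hdense
  haveI : CompleteSpace (wedgeSpace (mixedD a) (mixedC a) Ωs) :=
    (wedge_isClosed _ _ _).completeSpace_coe
  haveI : CompleteSpace (wedgeSpace (mixedC a) (mixedD a) Ω) :=
    (wedge_isClosed _ _ _).completeSpace_coe
  have hV'le : wedgeSpace (mixedD a) (mixedC a) Ωs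
      ≤ (wedgeSpace (mixedC a) (mixedD a) Ω)ᗮ := by
    intro y hy
    rw [Submodule.mem_orthogonal]
    intro u hu
    exact horthog u hu y hy
  have hperp : (wedgeSpace (mixedC a) (mixedD a) Ω)ᗮ
      ≤ wedgeSpace (mixedD a) (mixedC a) Ωs := by
    intro x hx
    have hsup : wedgeSpace (mixedD a) (mixedC a) Ωs
        ⊔ (wedgeSpace (mixedD a) (mixedC a) Ωs)ᗮ = ⊤ :=
      Submodule.sup_orthogonal_of_hasOrthogonalProjection
    have hxmem : x ∈ wedgeSpace (mixedD a) (mixedC a) Ωs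
        ⊔ (wedgeSpace (mixedD a) (mixedC a) Ωs)ᗮ := by rw [hsup]; trivial
    obtain ⟨y, hy, z, hz, hyz⟩ := Submodule.mem_sup.mp hxmem
    have hzV : z ∈ (wedgeSpace (mixedC a) (mixedD a) Ω)ᗮ := by
      have hzx : z = x - y := eq_sub_of_add_eq' hyz
      rw [hzx]
      exact sub_mem hx (hV'le hy)
    have hzperp : z ∈ ((wedgeSpace (mixedC a) (mixedD a) Ω ⊔ wedgeSpace (mixedD a) (mixedC a) Ωs) : Submodule ℂ H)ᗮ := by
      rw [← Submodule.inf_orthogonal]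
      exact Submodule.mem_inf.mpr ⟨hzV, hz⟩
    rw [horth_bot] at hzperp
    have hz0 : z = 0 := (Submodule.mem_bot ℂ).mp hzperp
    rw [← hyz, hz0, add_zero]
    exact hy
  have htop : wedgeSpace (mixedC a) (mixedD a) Ω
      ⊔ (wedgeSpace (mixedC a) (mixedD a) Ω)ᗮ = ⊤ :=
    Submodule.sup_orthogonal_of_hasOrthogonalProjection
  exact top_unique (htop ▸ sup_le_sup_left hperp _)
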